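/- Let H be a d-regular graph on vertex set [h] (d ≥ 2), fix n ≥ 1, L ≥ 20, and a pattern (a,e). If U ⊆ V(Γ) satisfies conditions (LD1) and (LD2), then for every (i,w) ∈ U, Σ_{(i′,w′)∈N_{Γ_LD}(i,w)∩U} (a_{i,w}a_{i′,w′}/n)·(1 + ε_{i,w,i′,w′}/2)·log(1 + ε_{i,w,i′,w′}) ≥ (L/4)·a_{i,w}·log(en/a_{i,w}). -/

import Mathlib

open scoped BigOperators
open scoped Classical

namespace RandomLifts

noncomputable section

/-- Probability of an event under the uniform measure on a finite type. -/
def unifProb {Ω : Type*} [Fintype Ω] (p : Ω → Prop) : ℝ :=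
  letI := Classical.decPred p
  ((Finset.univ.filter p).card : ℝ) / (Fintype.card Ω : ℝ)

/-- The sample space of a random `n`-lift of a graph on `Fin h`: an
independent, uniformly random permutation for each (ordered) pair of fibres
(only the permutations attached to pairs `i < i'` with `i ~ i'` are used). -/
abbrev LiftSpace (h n : ℕ) := Fin h → Fin h → Equiv.Perm (Fin n)

/-- The `n`-lift of `H` determined by the matchings `ω`. -/
def liftGraph {h n : ℕ} (H : SimpleGraph (Fin h)) (ω : LiftSpace h n) :
    SimpleGraph (Fin h × Fin n) where
  Adj u v := H.Adj u.1 v.1 ∧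
    ((u.1 < v.1 ∧ v.2 = ω u.1 v.1 u.2) ∨ (v.1 < u.1 ∧ u.2 = ω v.1 u.1 v.2))
  symm := by
    constructor
    intro u v huv
    exact ⟨huv.1.symm, huv.2.symm⟩
  loopless := by
    constructor
    intro u hu
    exact H.loopless.irrefl u.1 hu.1

/-- The adjacency matrix of a graph, with real entries. -/
def adjMat {V : Type*} (G : SimpleGraph V) : Matrix V V ℝ :=
  fun u v => if G.Adj u v then 1 else 0

/-- The largest eigenvalue of (the adjacency matrix of) a graph on a finite
vertex set. -/
def lambdaMax {V : Type*} [Fintype V] (G : SimpleGraph V) : ℝ :=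
  sSup {μ : ℝ | ∃ x : V → ℝ, x ≠ 0 ∧ (adjMat G).mulVec x = μ • x}

/-- `λ*(G)`: the largest absolute value of a *new* eigenvalue of a lift,
i.e. of an eigenvalue admitting an eigenvector balanced on every fibre. -/
def lambdaStar {h n : ℕ} (G : SimpleGraph (Fin h × Fin n)) : ℝ :=
  sSup {r : ℝ | ∃ (μ : ℝ) (x : Fin h × Fin n → ℝ), x ≠ 0 ∧
    (adjMat G).mulVec x = μ • x ∧ (∀ i : Fin h, ∑ j : Fin n, x (i, j) = 0) ∧ r = |μ|}

/-- The matrix `M̄` of edge probabilities. -/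
def Mbar (h n : ℕ) (H : SimpleGraph (Fin h)) :
    Matrix (Fin h × Fin n) (Fin h × Fin n) ℝ :=
  fun u v => if H.Adj u.1 v.1 then 1 / (n : ℝ) else 0

/-- `N = M − M̄`. -/
def Nmat {h n : ℕ} (H : SimpleGraph (Fin h)) (G : SimpleGraph (Fin h × Fin n)) :
    Matrix (Fin h × Fin n) (Fin h × Fin n) ℝ :=
  adjMat G - Mbar h n H

/-- `⟨x,x⟩_A`. -/
def quadForm {V : Type*} [Fintype V] (A : Matrix V V ℝ) (x : V → ℝ) : ℝ :=
  ∑ u, ∑ v, x u * A u v * x v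

/-- `⟨x,x⟩_{A,E}`: the quadratic form restricted to pairs of entries lying in
`E ⊆ ℝ²`. -/
def quadFormOn {V : Type*} [Fintype V] (A : Matrix V V ℝ) (E : Set (ℝ × ℝ))
    (x : V → ℝ) : ℝ :=
  ∑ u, ∑ v, if (x u, x v) ∈ E then x u * A u v * x v else 0

/-- The set `E* = {(x₁,x₂) : x₁,x₂ > 0, d^{-1/2} < x₁/x₂ < d^{1/2}}`. -/
def Estar (d : ℕ) : Set (ℝ × ℝ) :=
  {p | 0 < p.1 ∧ 0 < p.2 ∧ (Real.sqrt d)⁻¹ < p.1 / p.2 ∧ p.1 / p.2 < Real.sqrt d}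

/-- `D^{>0} = {2^i/√(nh) : i ≥ 1}`. -/
def Dpos (n h : ℕ) : Set ℝ := {w | ∃ i : ℕ, 1 ≤ i ∧ w = 2 ^ i / Real.sqrt (n * h)}

/-- `D⁺ = {0} ∪ D^{>0}`. -/
def Dplus (n h : ℕ) : Set ℝ := insert 0 (Dpos n h)

/-- Membership in the set `Z` of dyadic test vectors. -/
def memZ (d h n : ℕ) (x : Fin h × Fin n → ℝ) : Prop :=
  (∑ v, x v ^ 2) ≤ 10 ∧ (∀ v, x v ∈ Dplus n h) ∧
    ∀ u v, x v ≠ 0 → x u ≤ (d : ℝ) * x v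

/-- A `Z`-type. -/
def IsZType (d h n : ℕ) (a : Fin h → ℝ → ℕ) : Prop :=
  (∀ i w, a i w ≠ 0 → w ∈ Dplus n h) ∧
  (∀ i, (∑ᶠ w : ℝ, a i w) ≤ n) ∧
  (∃ w₀ ∈ Dpos n h, ∀ i w, a i w ≠ 0 → w₀ ≤ w ∧ w ≤ w₀ * d) ∧
  ((∑ i : Fin h, ∑ᶠ w : ℝ, w ^ 2 * (a i w : ℝ)) ≤ 10)

/-- A pattern `(a,e)`. -/
def IsPattern (d h n : ℕ) (H : SimpleGraph (Fin h)) (a : Fin h → ℝ → ℕ)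
    (e : Fin h → ℝ → Fin h → ℝ → ℕ) : Prop :=
  IsZType d h n a ∧
  (∀ i w i' w', e i w i' w' = e i' w' i w) ∧
  (∀ i w i' w', e i w i' w' ≤ min (a i w) (a i' w')) ∧
  (∀ i w i' w', ¬H.Adj i i' → e i w i' w' = 0)

/-- The adjacency relation of the graph `Γ`. -/
def gammaAdj (d h n : ℕ) (H : SimpleGraph (Fin h)) (p q : Fin h × ℝ) : Prop :=
  H.Adj p.1 q.1 ∧ p.2 ∈ Dpos n h ∧ q.2 ∈ Dpos n h ∧
    (Real.sqrt d)⁻¹ < p.2 / q.2 ∧ p.2 / q.2 < Real.sqrt d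

/-- The summand `w w' (e_{i,w,i',w'} − a_{i,w}a_{i',w'}/n)` appearing in the
potency, for an ordered pair of `Γ`-adjacent vertices. -/
def potTerm (d h n : ℕ) (H : SimpleGraph (Fin h)) (a : Fin h → ℝ → ℕ)
    (e : Fin h → ℝ → Fin h → ℝ → ℕ) (p q : Fin h × ℝ) : ℝ :=
  if gammaAdj d h n H p q then
    p.2 * q.2 * ((e p.1 p.2 q.1 q.2 : ℝ) - (a p.1 p.2 : ℝ) * (a q.1 q.2 : ℝ) / n)
  else 0

/-- The potency `p(a,e)` of a pattern: the sum over unordered edges of `Γ`,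
realised as half of the sum over ordered pairs. -/
def potency (d h n : ℕ) (H : SimpleGraph (Fin h)) (a : Fin h → ℝ → ℕ)
    (e : Fin h → ℝ → Fin h → ℝ → ℕ) : ℝ :=
  |(1 / 2 : ℝ) * ∑ i : Fin h, ∑ i' : Fin h, ∑ᶠ w : ℝ, ∑ᶠ w' : ℝ,
      potTerm d h n H a e (i, w) (i', w')|

/-- The maximal potency `p̃(a,e)` over subsets of the edges of `Γ`. -/
def potencyTilde (d h n : ℕ) (H : SimpleGraph (Fin h)) (a : Fin h → ℝ → ℕ)
    (e : Fin h → ℝ → Fin h → ℝ → ℕ) : ℝ :=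
  sSup {r : ℝ | ∃ E : Set ((Fin h × ℝ) × (Fin h × ℝ)),
    (∀ pq ∈ E, gammaAdj d h n H pq.1 pq.2) ∧
    (∀ p q, (p, q) ∈ E → (q, p) ∈ E) ∧
    r = |(1 / 2 : ℝ) * ∑ i : Fin h, ∑ i' : Fin h, ∑ᶠ w : ℝ, ∑ᶠ w' : ℝ,
        (if ((i, w), (i', w')) ∈ E then potTerm d h n H a e (i, w) (i', w') else 0)|}

/-- The type of the sub-pattern `(a,e)_S`, first component. -/
def restrictA {h : ℕ} (S : Set (Fin h × ℝ)) (a : Fin h → ℝ → ℕ) :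
    Fin h → ℝ → ℕ :=
  fun i w => if (i, w) ∈ S then a i w else 0

/-- The edge counts of the sub-pattern `(a,e)_S`, second component. -/
def restrictE {h : ℕ} (S : Set (Fin h × ℝ)) (e : Fin h → ℝ → Fin h → ℝ → ℕ) :
    Fin h → ℝ → Fin h → ℝ → ℕ :=
  fun i w i' w' => if (i, w) ∈ S ∧ (i', w') ∈ S then e i w i' w' else 0

/-- `A_{i,w}(y) = {v ∈ V_i : y_v = w}`. -/
def Aset {h n : ℕ} (y : Fin h × Fin n → ℝ) (i : Fin h) (w : ℝ) :
    Finset (Fin h × Fin n) :=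
  letI := Classical.decPred fun v : Fin h × Fin n => v.1 = i ∧ y v = w
  Finset.univ.filter fun v => v.1 = i ∧ y v = w

/-- The number of edges of `G` between the sets `A` and `B`. -/
def edgeCount {h n : ℕ} (G : SimpleGraph (Fin h × Fin n))
    (A B : Finset (Fin h × Fin n)) : ℕ :=
  letI := Classical.decPred fun pq : (Fin h × Fin n) × (Fin h × Fin n) => G.Adj pq.1 pq.2
  ((A ×ˢ B).filter fun pq => G.Adj pq.1 pq.2).card

/-- The pattern `(a,e)` can be found in `G` (with some witness `y ∈ Z`). -/
def canFind (d h n : ℕ) (H : SimpleGraph (Fin h)) (G : SimpleGraph (Fin h × Fin n))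
    (a : Fin h → ℝ → ℕ) (e : Fin h → ℝ → Fin h → ℝ → ℕ) : Prop :=
  ∃ y : Fin h × Fin n → ℝ, memZ d h n y ∧
    (∀ i : Fin h, ∀ w ∈ Dpos n h, a i w = (Aset y i w).card) ∧
    (∀ i w i' w', H.Adj i i' → w ∈ Dpos n h → w' ∈ Dpos n h →
      e i w i' w' = edgeCount G (Aset y i w) (Aset y i' w'))

/-- The normalised deviation `ε_{i,w,i',w'}` of a pattern. -/
def epsP {h : ℕ} (n : ℕ) (a : Fin h → ℝ → ℕ) (e : Fin h → ℝ → Fin h → ℝ → ℕ)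
    (p q : Fin h × ℝ) : ℝ :=
  if a p.1 p.2 = 0 ∨ a q.1 q.2 = 0 then 1
  else (e p.1 p.2 q.1 q.2 : ℝ) / ((a p.1 p.2 : ℝ) * (a q.1 q.2 : ℝ) / n) - 1

/-- `b(ε) = (1+ε)log(1+ε) − ε` (with `b(−1)=1`, automatic as `log 0 = 0`). -/
def bFun (x : ℝ) : ℝ := (1 + x) * Real.log (1 + x) - x

/-- The adjacency relation of the large-deviations graph `Γ_LD`. -/
def gammaLDAdj (d h n : ℕ) (H : SimpleGraph (Fin h)) (a : Fin h → ℝ → ℕ)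
    (e : Fin h → ℝ → Fin h → ℝ → ℕ) (p q : Fin h × ℝ) : Prop :=
  gammaAdj d h n H p q ∧ Real.exp 2 - 1 < epsP n a e p q

/-- The adjacency relation of the small-deviations graph `Γ_SD`. -/
def gammaSDAdj (d h n : ℕ) (H : SimpleGraph (Fin h)) (a : Fin h → ℝ → ℕ)
    (e : Fin h → ℝ → Fin h → ℝ → ℕ) (p q : Fin h × ℝ) : Prop :=
  gammaAdj d h n H p q ∧ epsP n a e p q ≤ Real.exp 2 - 1

/-- The summand `w w' (a_{i,w}a_{i',w'}/n) ε_{i,w,i',w'}` over `Γ_LD`. -/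
def potTermLD (d h n : ℕ) (H : SimpleGraph (Fin h)) (a : Fin h → ℝ → ℕ)
    (e : Fin h → ℝ → Fin h → ℝ → ℕ) (p q : Fin h × ℝ) : ℝ :=
  if gammaLDAdj d h n H a e p q then
    p.2 * q.2 * ((a p.1 p.2 : ℝ) * (a q.1 q.2 : ℝ) / n) * epsP n a e p q
  else 0

/-- The summand `w w' (a_{i,w}a_{i',w'}/n) ε_{i,w,i',w'}` over `Γ_SD`. -/
def potTermSD (d h n : ℕ) (H : SimpleGraph (Fin h)) (a : Fin h → ℝ → ℕ)
    (e : Fin h → ℝ → Fin h → ℝ → ℕ) (p q : Fin h × ℝ) : ℝ :=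
  if gammaSDAdj d h n H a e p q then
    p.2 * q.2 * ((a p.1 p.2 : ℝ) * (a q.1 q.2 : ℝ) / n) * epsP n a e p q
  else 0

/-- The large-deviations potency `p_LD(a,e)`. -/
def pLD (d h n : ℕ) (H : SimpleGraph (Fin h)) (a : Fin h → ℝ → ℕ)
    (e : Fin h → ℝ → Fin h → ℝ → ℕ) : ℝ :=
  |(1 / 2 : ℝ) * ∑ i : Fin h, ∑ i' : Fin h, ∑ᶠ w : ℝ, ∑ᶠ w' : ℝ,
      potTermLD d h n H a e (i, w) (i', w')|

/-- The small-deviations potency `p_SD(a,e)`. -/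
def pSD (d h n : ℕ) (H : SimpleGraph (Fin h)) (a : Fin h → ℝ → ℕ)
    (e : Fin h → ℝ → Fin h → ℝ → ℕ) : ℝ :=
  |(1 / 2 : ℝ) * ∑ i : Fin h, ∑ i' : Fin h, ∑ᶠ w : ℝ, ∑ᶠ w' : ℝ,
      potTermSD d h n H a e (i, w) (i', w')|

/-- The local large-deviations potency `p_LD((a,e);(i,w))`. -/
def pLDlocal (d h n : ℕ) (H : SimpleGraph (Fin h)) (a : Fin h → ℝ → ℕ)
    (e : Fin h → ℝ → Fin h → ℝ → ℕ) (p : Fin h × ℝ) : ℝ :=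
  |∑ i' : Fin h, ∑ᶠ w' : ℝ, potTermLD d h n H a e p (i', w')|

/-- The weighted neighbourhood mass `N̂_{i,w}(a,e)`. -/
def Nhat (d h n : ℕ) (H : SimpleGraph (Fin h)) (a : Fin h → ℝ → ℕ)
    (p : Fin h × ℝ) : ℝ :=
  ∑ i' : Fin h, ∑ᶠ w' : ℝ,
    (if gammaAdj d h n H p (i', w') then
      w' ^ 2 * (a i' w' : ℝ) * (w' / (p.2 * Real.sqrt d)) else 0)

/-- Condition (LD1) for a set `U ⊆ V(Γ)`. -/
def condLD1 (d h n : ℕ) (H : SimpleGraph (Fin h)) (L : ℝ) (a : Fin h → ℝ → ℕ)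
    (e : Fin h → ℝ → Fin h → ℝ → ℕ) (U : Set (Fin h × ℝ)) : Prop :=
  ∀ p ∈ U, L * (a p.1 p.2 : ℝ) * p.2 ^ 2 * Real.sqrt d ≤
    pLDlocal d h n H (restrictA U a) (restrictE U e) p

/-- Condition (LD2) for a set `U ⊆ V(Γ)`. -/
def condLD2 (d h n : ℕ) (H : SimpleGraph (Fin h)) (L : ℝ) (a : Fin h → ℝ → ℕ)
    (e : Fin h → ℝ → Fin h → ℝ → ℕ) (U : Set (Fin h × ℝ)) : Prop :=
  ∀ p ∈ U, L * Nhat d h n H a p / Real.sqrt d ≤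
    pLDlocal d h n H (restrictA U a) (restrictE U e) p

/-- `Π_{(i,w)∈S, a_{i,w}≥1} a_{i,w}^{d/4}`. -/
def prodA {h : ℕ} (d : ℕ) (S : Set (Fin h × ℝ)) (a : Fin h → ℝ → ℕ) : ℝ :=
  ∏ᶠ (p : Fin h × ℝ) (_ : p ∈ S ∧ 1 ≤ a p.1 p.2),
    ((a p.1 p.2 : ℝ) ^ ((d : ℝ) / 4))

/-- `Π_{(i,w)∈S, a_{i,w}≥1} C(n, min(a_{i,w}, ⌊n/2⌋))`. -/
def prodChoose {h : ℕ} (n : ℕ) (S : Set (Fin h × ℝ)) (a : Fin h → ℝ → ℕ) : ℝ :=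
  ∏ᶠ (p : Fin h × ℝ) (_ : p ∈ S ∧ 1 ≤ a p.1 p.2),
    ((n.choose (min (a p.1 p.2) (n / 2)) : ℝ))

/-- The number of matching edges between `A` and `B` under the bijection `M`. -/
def matchCount {n : ℕ} (M : Equiv.Perm (Fin n)) (A B : Finset (Fin n)) : ℕ :=
  (A.filter fun v => M v ∈ B).card

end

end RandomLifts

namespace RandomLifts


lemma exp_two_ge : (3:ℝ) ≤ Real.exp 2 := by
  have := Real.add_one_le_exp (2:ℝ); linarith

lemma log_sqrt_mono {x y : ℝ} (hx : 0 < x) (h2 : 2 ≤ Real.log x) (hxy : x ≤ y) :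
    Real.log y * Real.sqrt x ≤ Real.log x * Real.sqrt y := by
  have ht0 : 0 < y / x := div_pos (lt_of_lt_of_le hx hxy) hx
  have ht1 : 1 ≤ y / x := (one_le_div hx).2 hxy
  have hlt : Real.log (y / x) ≤ 2 * (Real.sqrt (y / x) - 1) := by
    have h := Real.log_le_sub_one_of_pos (Real.sqrt_pos.2 ht0)
    rw [Real.log_sqrt ht0.le] at h
    linarith
  have hlogt : Real.log y = Real.log x + Real.log (y / x) := by
    rw [← Real.log_mul (ne_of_gt hx) (ne_of_gt ht0)]
    congr 1
    field_simp
  have hst : Real.sqrt y = Real.sqrt x * Real.sqrt (y / x) := by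
    rw [← Real.sqrt_mul hx.le]
    congr 1
    field_simp
  have hsx : 0 ≤ Real.sqrt x := Real.sqrt_nonneg x
  have hs1 : 1 ≤ Real.sqrt (y / x) := by
    rw [show (1:ℝ) = Real.sqrt 1 by rw [Real.sqrt_one]]
    exact Real.sqrt_le_sqrt ht1
  rw [hlogt, hst]
  nlinarith [mul_le_mul_of_nonneg_left hlt hsx,
    mul_le_mul_of_nonneg_right h2 (mul_nonneg hsx (by linarith : (0:ℝ) ≤ Real.sqrt (y/x) - 1))]

lemma amgm3 (s u : ℝ) (hs : 0 ≤ s) (hu : 0 ≤ u) : 3*s^2*u ≤ u^3 + 2*s^3 := by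
  nlinarith [mul_nonneg (sq_nonneg (u - s)) (by linarith : (0:ℝ) ≤ u + 2*s)]

lemma core (L R ρ u ℓ : ℝ) (hL : 20 ≤ L) (hℓ : ℓ = 1 + Real.log R) (hℓ4 : 4 ≤ ℓ)
    (hρ : Real.exp 2 < ρ) (hρR : ρ ≤ R) (hu : 0 < u) :
    ℓ/2*u*(ρ-1) ≤ ρ/2*Real.log ρ + ℓ*L*R/4*u^3 := by
  have hρ0 : 0 < ρ := lt_trans (Real.exp_pos 2) hρ
  have hρ1 : 1 ≤ ρ := le_trans (Real.one_le_exp (by norm_num)) hρ.le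
  have hR0 : 0 < R := lt_of_lt_of_le hρ0 hρR
  have hL0 : (0:ℝ) < L := by linarith
  have hlogρ : 2 ≤ Real.log ρ := (Real.le_log_iff_exp_le hρ0).2 hρ.le
  have hlogR : 3 ≤ Real.log R := by rw [hℓ] at hℓ4; linarith
  have hℓ0 : 0 ≤ ℓ := by linarith
  -- key1
  have key1 : Real.log R * Real.sqrt ρ ≤ Real.log ρ * Real.sqrt R :=
    log_sqrt_mono hρ0 hlogρ hρR
  set s := Real.sqrt (2*(ρ-1)/(3*L*R)) with hs_def
  have hs0 : 0 ≤ s := Real.sqrt_nonneg _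
  have harg : 0 ≤ 2*(ρ-1)/(3*L*R) :=
    div_nonneg (by linarith) (by positivity)
  have hs2 : s^2 = 2*(ρ-1)/(3*L*R) := Real.sq_sqrt harg
  set σ := Real.sqrt (ρ/R) with hσ_def
  have hσ0 : 0 ≤ σ := Real.sqrt_nonneg _
  -- s ≤ σ/5
  have hsσ : s ≤ σ/5 := by
    have h1 : 2*(ρ-1)/(3*L*R) ≤ (ρ/R)/25 := by
      rw [div_div, div_le_div_iff₀ (by positivity) (by positivity)]
      nlinarith [mul_le_mul_of_nonneg_right hL (mul_nonneg hρ0.le hR0.le),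
        mul_nonneg hR0.le (by linarith : (0:ℝ) ≤ ρ - 1)]
    have h2 : s ≤ Real.sqrt ((ρ/R)/25) := Real.sqrt_le_sqrt h1
    have h3 : Real.sqrt ((ρ/R)/25) = σ/5 := by
      rw [Real.sqrt_div (by positivity : (0:ℝ) ≤ ρ/R),
        show (25:ℝ) = 5^2 by norm_num, Real.sqrt_sq (by norm_num : (0:ℝ) ≤ 5)]
    rw [h3] at h2; exact h2
  -- logρ ≥ (ℓ-1)σ
  have hsqR : 0 < Real.sqrt R := Real.sqrt_pos.2 hR0
  have hσlog : (ℓ - 1)*σ ≤ Real.log ρ := by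
    have h4 : Real.log R * σ ≤ Real.log ρ := by
      rw [hσ_def, Real.sqrt_div hρ0.le, mul_div_assoc', div_le_iff₀ hsqR]
      exact key1
    rw [hℓ]; ring_nf; linarith [h4]
  -- amgm
  have step1 : ℓ/2*u*(ρ-1) = (ℓ*L*R/4)*(3*s^2*u) := by
    rw [hs2]; field_simp; ring
  have step2 : (ℓ*L*R/4)*(3*s^2*u) ≤ (ℓ*L*R/4)*(u^3+2*s^3) :=
    mul_le_mul_of_nonneg_left (amgm3 s u hs0 hu.le) (by positivity)
  have step4 : (ℓ*L*R/4)*(u^3+2*s^3) = ℓ*L*R/4*u^3 + (ℓ*L*R/2)*s^2*s := by ring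
  have step5 : (ℓ*L*R/2)*s^2*s = (ℓ*(ρ-1)/3)*s := by
    rw [hs2]; field_simp
  have h6 : (ℓ*(ρ-1)/3)*s ≤ (ℓ*ρ/3)*(σ/5) := by
    apply mul_le_mul (by nlinarith) hsσ hs0 (by positivity)
  have h7 : (ℓ*ρ/3)*(σ/5) ≤ ρ/2*Real.log ρ := by
    nlinarith [mul_le_mul_of_nonneg_left hσlog (by linarith : (0:ℝ) ≤ ρ/2),
      mul_nonneg hρ0.le hσ0,
      mul_le_mul_of_nonneg_right (by linarith : (4:ℝ) ≤ ℓ) (mul_nonneg hρ0.le hσ0)]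
  linarith [step2]


set_option maxHeartbeats 1600000 in
theorem statement18 (d h n : ℕ) (hd : 2 ≤ d) (hn : 1 ≤ n) (H : SimpleGraph (Fin h))
    [DecidableRel H.Adj] (hreg : H.IsRegularOfDegree d) (L : ℝ) (hL : 20 ≤ L)
    (a : Fin h → ℝ → ℕ) (e : Fin h → ℝ → Fin h → ℝ → ℕ)
    (hP : IsPattern d h n H a e)
    (U : Set (Fin h × ℝ))
    (h1 : condLD1 d h n H L a e U) (h2 : condLD2 d h n H L a e U) :
    ∀ p ∈ U,
      L / 4 * (a p.1 p.2 : ℝ) *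
          Real.log (Real.exp 1 * (n : ℝ) / (a p.1 p.2 : ℝ)) ≤
        ∑ i' : Fin h, ∑ᶠ w' : ℝ,
          (if gammaLDAdj d h n H a e p (i', w') ∧ (i', w') ∈ U then
            (a p.1 p.2 : ℝ) * (a i' w' : ℝ) / n *
              ((1 + epsP n a e p (i', w') / 2) *
                Real.log (1 + epsP n a e p (i', w')))
          else 0) := by
  classical
  obtain ⟨⟨hZ1, hZ2, ⟨w₀, hw₀, hwin⟩, hZ4⟩, hsym, hle, hadjH⟩ := hP
  intro p hpU
  by_cases hA : a p.1 p.2 = 0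
  · simp [hA]
  have hh : 0 < h := p.1.pos
  have hexp2 : (3:ℝ) ≤ Real.exp 2 := exp_two_ge
  have hnh : (0:ℝ) < (n:ℝ) * (h:ℝ) := by
    have h1 : (0:ℝ) < n := by exact_mod_cast hn
    have h2 : (0:ℝ) < h := by exact_mod_cast hh
    exact mul_pos h1 h2
  have hsqnh : 0 < Real.sqrt ((n:ℝ) * (h:ℝ)) := Real.sqrt_pos.2 hnh
  have hDp : ∀ x ∈ Dpos n h, (0:ℝ) < x := by
    rintro x ⟨j, hj, rfl⟩
    exact div_pos (by positivity) hsqnh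
  have hw0pos : 0 < w₀ := hDp w₀ hw₀
  have hwpos : 0 < p.2 := lt_of_lt_of_le hw0pos (hwin p.1 p.2 hA).1
  have hd0 : (0:ℝ) < (d:ℝ) := by
    have : 0 < d := by omega
    exact_mod_cast this
  have hD : 0 < Real.sqrt d := Real.sqrt_pos.2 hd0
  obtain ⟨K, hK⟩ := pow_unbounded_of_one_lt
    (w₀ * d * Real.sqrt ((n:ℝ) * (h:ℝ))) (one_lt_two (α := ℝ))
  set F : Finset ℝ :=
    (Finset.range K).image (fun k => (2:ℝ)^k / Real.sqrt ((n:ℝ)*(h:ℝ))) with hF_def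
  have hmemF : ∀ (i' : Fin h) (w' : ℝ), a i' w' ≠ 0 → w' ∈ F := by
    intro i' w' hne
    have hmem := hZ1 i' w' hne
    have hwin' := hwin i' w' hne
    have hw'pos : 0 < w' := lt_of_lt_of_le hw0pos hwin'.1
    rcases hmem with h0 | hpos
    · exact absurd h0 (by intro h0'; rw [h0'] at hw'pos; exact lt_irrefl _ hw'pos)
    obtain ⟨j, hj1, hj2⟩ := hpos
    apply Finset.mem_image.2
    refine ⟨j, Finset.mem_range.2 ?_, hj2.symm⟩
    have h2j : (2:ℝ)^j < 2^K := by
      have e1 : (2:ℝ)^j = w' * Real.sqrt ((n:ℝ)*(h:ℝ)) := by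
        rw [hj2]; field_simp
      have e2 : w' * Real.sqrt ((n:ℝ)*(h:ℝ)) ≤ w₀ * d * Real.sqrt ((n:ℝ)*(h:ℝ)) :=
        mul_le_mul_of_nonneg_right hwin'.2 hsqnh.le
      linarith [hK]
    exact (pow_lt_pow_iff_right₀ (one_lt_two (α := ℝ))).1 h2j
  have hApos : (0:ℝ) < (a p.1 p.2 : ℝ) := by
    exact_mod_cast Nat.pos_of_ne_zero hA
  have hnpos : (0:ℝ) < n := by exact_mod_cast hn
  have hAn : (a p.1 p.2 : ℝ) ≤ n := by
    have hsup : (Function.support fun w => a p.1 w) ⊆ ↑F := by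
      intro w hw; exact hmemF p.1 w hw
    have hfin : ∑ᶠ w : ℝ, a p.1 w = ∑ w ∈ F, a p.1 w :=
      finsum_eq_sum_of_support_subset _ hsup
    have h2 := hZ2 p.1
    rw [hfin] at h2
    have h3 : a p.1 p.2 ≤ ∑ w ∈ F, a p.1 w :=
      Finset.single_le_sum (fun _ _ => Nat.zero_le _) (hmemF p.1 p.2 hA)
    exact_mod_cast le_trans h3 h2
  have hR0 : 0 < (n:ℝ)/(a p.1 p.2 : ℝ) := div_pos hnpos hApos
  have hℓR : Real.log (Real.exp 1 * (n:ℝ) / (a p.1 p.2 : ℝ))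
      = 1 + Real.log ((n:ℝ)/(a p.1 p.2 : ℝ)) := by
    rw [show Real.exp 1 * (n:ℝ) / (a p.1 p.2 : ℝ)
        = Real.exp 1 * ((n:ℝ)/(a p.1 p.2 : ℝ)) by ring,
      Real.log_mul (Real.exp_ne_zero 1) (ne_of_gt hR0), Real.log_exp]
  have hR1 : 1 ≤ (n:ℝ)/(a p.1 p.2 : ℝ) := (one_le_div hApos).2 hAn
  have hℓ1 : 1 ≤ Real.log (Real.exp 1 * (n:ℝ) / (a p.1 p.2 : ℝ)) := by
    rw [hℓR]; linarith [Real.log_nonneg hR1]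
  have hpU' : ((p.1, p.2) : Fin h × ℝ) ∈ U := by rw [Prod.mk.eta]; exact hpU
  have haqP : ∀ (i' : Fin h) (w' : ℝ),
      Real.exp 2 - 1 < epsP n a e p (i', w') → a i' w' ≠ 0 := by
    intro i' w' hgt h0
    simp only [epsP] at hgt
    rw [if_pos (Or.inr h0)] at hgt
    linarith
  have hepsrU : ∀ (i' : Fin h) (w' : ℝ), ((i', w') : Fin h × ℝ) ∈ U →
      epsP n (restrictA U a) (restrictE U e) p (i', w') = epsP n a e p (i', w') := by
    intro i' w' hqU
    simp [epsP, restrictA, restrictE, hpU, hqU]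
  have hteq : ∀ (i' : Fin h) (w' : ℝ),
      potTermLD d h n H (restrictA U a) (restrictE U e) p (i', w') =
      if gammaLDAdj d h n H a e p (i', w') ∧ (i', w') ∈ U then
        p.2 * w' * ((a p.1 p.2 : ℝ) * (a i' w' : ℝ) / n) * epsP n a e p (i', w')
      else 0 := by
    intro i' w'
    by_cases hq : gammaLDAdj d h n H a e p (i', w') ∧ (i', w') ∈ U
    · have hqU : ((i', w') : Fin h × ℝ) ∈ U := hq.2
      have hepsr := hepsrU i' w' hqU
      have hLDr : gammaLDAdj d h n H (restrictA U a) (restrictE U e) p (i', w') :=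
        ⟨hq.1.1, by rw [hepsr]; exact hq.1.2⟩
      rw [if_pos hq]
      simp only [potTermLD]
      rw [if_pos hLDr]
      simp [restrictA, hpU, hqU, hepsr]
    · rw [if_neg hq]
      simp only [potTermLD]
      rw [if_neg ?_]
      intro hLDr
      have h2' := hLDr.2
      have hrna : restrictA U a i' w' ≠ 0 := by
        intro h0
        simp only [epsP] at h2'
        rw [if_pos (Or.inr h0)] at h2'
        linarith
      have hqU : ((i', w') : Fin h × ℝ) ∈ U := by
        by_contra hnot
        exact hrna (by simp [restrictA, hnot])
      have hepsr := hepsrU i' w' hqU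
      rw [hepsr] at h2'
      exact hq ⟨⟨hLDr.1, h2'⟩, hqU⟩
  have htnn : ∀ (i' : Fin h) (w' : ℝ), (0:ℝ) ≤
      (if gammaLDAdj d h n H a e p (i', w') ∧ (i', w') ∈ U then
        p.2 * w' * ((a p.1 p.2 : ℝ) * (a i' w' : ℝ) / n) * epsP n a e p (i', w')
      else 0) := by
    intro i' w'
    split_ifs with hq
    · have hw' : 0 < w' := hDp w' hq.1.1.2.2.1
      have heps : 0 ≤ epsP n a e p (i', w') := by linarith [hq.1.2]
      have hμ : (0:ℝ) ≤ (a p.1 p.2 : ℝ) * (a i' w' : ℝ) / n := by positivity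
      exact mul_nonneg (mul_nonneg (mul_nonneg hwpos.le hw'.le) hμ) heps
    · exact le_refl 0
  have hts : ∀ i' : Fin h,
      (∑ᶠ w' : ℝ, potTermLD d h n H (restrictA U a) (restrictE U e) p (i', w')) =
      ∑ w' ∈ F, potTermLD d h n H (restrictA U a) (restrictE U e) p (i', w') := by
    intro i'
    apply finsum_eq_sum_of_support_subset
    intro w' hw'
    rw [Function.mem_support, hteq i' w'] at hw'
    have haq : a i' w' ≠ 0 := by
      intro h0
      apply hw'
      split_ifs with hq
      · exact absurd h0 (haqP i' w' hq.1.2)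
      · rfl
    exact hmemF i' w' haq
  have hfs : ∀ i' : Fin h,
      (∑ᶠ w' : ℝ, (if gammaLDAdj d h n H a e p (i', w') ∧ (i', w') ∈ U then
        (a p.1 p.2 : ℝ) * (a i' w' : ℝ) / n *
          ((1 + epsP n a e p (i', w') / 2) * Real.log (1 + epsP n a e p (i', w')))
        else 0)) =
      ∑ w' ∈ F, (if gammaLDAdj d h n H a e p (i', w') ∧ (i', w') ∈ U then
        (a p.1 p.2 : ℝ) * (a i' w' : ℝ) / n *
          ((1 + epsP n a e p (i', w') / 2) * Real.log (1 + epsP n a e p (i', w')))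
        else 0) := by
    intro i'
    apply finsum_eq_sum_of_support_subset
    intro w' hw'
    rw [Function.mem_support] at hw'
    have haq : a i' w' ≠ 0 := by
      intro h0
      apply hw'
      split_ifs with hq
      · exact absurd h0 (haqP i' w' hq.1.2)
      · rfl
    exact hmemF i' w' haq
  have hgs : ∀ i' : Fin h,
      (∑ᶠ w' : ℝ, (if gammaAdj d h n H p (i', w') then
        w' ^ 2 * (a i' w' : ℝ) * (w' / (p.2 * Real.sqrt d)) else 0)) =
      ∑ w' ∈ F, (if gammaAdj d h n H p (i', w') then
        w' ^ 2 * (a i' w' : ℝ) * (w' / (p.2 * Real.sqrt d)) else 0) := by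
    intro i'
    apply finsum_eq_sum_of_support_subset
    intro w' hw'
    rw [Function.mem_support] at hw'
    have haq : a i' w' ≠ 0 := by
      intro h0
      apply hw'
      split_ifs with hq
      · rw [h0]; simp
      · rfl
    exact hmemF i' w' haq
  have hT1 := h1 p hpU
  have hT2 := h2 p hpU
  simp only [pLDlocal] at hT1 hT2
  simp only [hts] at hT1 hT2
  simp only [hteq] at hT1 hT2
  rw [abs_of_nonneg (Finset.sum_nonneg fun i' _ =>
    Finset.sum_nonneg fun w' _ => htnn i' w')] at hT1 hT2
  simp only [Nhat] at hT2
  simp only [hgs] at hT2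
  simp only [hfs]
  have hedge : ∀ (i' : Fin h) (w' : ℝ),
      gammaLDAdj d h n H a e p (i', w') ∧ (i', w') ∈ U →
      0 < w' ∧ w' < p.2 * Real.sqrt d ∧ a i' w' ≠ 0 ∧
      Real.exp 2 < 1 + epsP n a e p (i', w') ∧
      1 + epsP n a e p (i', w') ≤ (n:ℝ)/(a p.1 p.2 : ℝ) ∧
      2 ≤ Real.log (1 + epsP n a e p (i', w')) := by
    intro i' w' hq
    have hw' : 0 < w' := hDp w' hq.1.1.2.2.1
    have haq : a i' w' ≠ 0 := haqP i' w' hq.1.2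
    have haqpos : (0:ℝ) < (a i' w' : ℝ) := by
      exact_mod_cast Nat.pos_of_ne_zero haq
    have hμ : (0:ℝ) < (a p.1 p.2 : ℝ) * (a i' w' : ℝ) / n := by positivity
    have hρgt : Real.exp 2 < 1 + epsP n a e p (i', w') := by
      have := hq.1.2; linarith
    have hρpos : (0:ℝ) < 1 + epsP n a e p (i', w') :=
      lt_trans (Real.exp_pos 2) hρgt
    refine ⟨hw', ?_, haq, hρgt, ?_, ?_⟩
    · have hlt := hq.1.1.2.2.2.1
      have h5 : (Real.sqrt d)⁻¹ * w' < p.2 := (lt_div_iff₀ hw').1 hlt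
      calc w' = (Real.sqrt d)⁻¹ * w' * Real.sqrt d := by field_simp
        _ < p.2 * Real.sqrt d := mul_lt_mul_of_pos_right h5 hD
    · have hE : (e p.1 p.2 i' w' : ℝ) ≤ (a i' w' : ℝ) := by
        exact_mod_cast le_trans (hle p.1 p.2 i' w') (min_le_right _ _)
      have hεeq : epsP n a e p (i', w') =
          (e p.1 p.2 i' w' : ℝ)/((a p.1 p.2 : ℝ) * (a i' w' : ℝ)/n) - 1 := by
        simp only [epsP]
        rw [if_neg (not_or.2 ⟨hA, haq⟩)]
      rw [hεeq, show (1:ℝ) + ((e p.1 p.2 i' w' : ℝ)/((a p.1 p.2 : ℝ) * (a i' w' : ℝ)/n) - 1)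
          = (e p.1 p.2 i' w' : ℝ)/((a p.1 p.2 : ℝ) * (a i' w' : ℝ)/n) by ring]
      rw [div_le_div_iff₀ hμ hApos]
      calc (e p.1 p.2 i' w' : ℝ) * (a p.1 p.2 : ℝ)
          ≤ (a i' w' : ℝ) * (a p.1 p.2 : ℝ) := mul_le_mul_of_nonneg_right hE hApos.le
        _ = (n:ℝ) * ((a p.1 p.2 : ℝ) * (a i' w' : ℝ) / n) := by
            field_simp
    · exact (Real.le_log_iff_exp_le hρpos).2 hρgt.le
  rcases le_or_gt (Real.log (Real.exp 1 * (n:ℝ) / (a p.1 p.2 : ℝ))) 4 with hc | hc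
  · -- Case ℓ ≤ 4
    have hkey : ∀ (i' : Fin h), ∀ w' ∈ F,
        (if gammaLDAdj d h n H a e p (i', w') ∧ (i', w') ∈ U then
          p.2 * w' * ((a p.1 p.2 : ℝ) * (a i' w' : ℝ) / n) * epsP n a e p (i', w')
        else 0) ≤
        p.2 ^ 2 * Real.sqrt d *
        (if gammaLDAdj d h n H a e p (i', w') ∧ (i', w') ∈ U then
          (a p.1 p.2 : ℝ) * (a i' w' : ℝ) / n *
            ((1 + epsP n a e p (i', w') / 2) * Real.log (1 + epsP n a e p (i', w')))
        else 0) := by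
      intro i' w' _
      split_ifs with hq
      · obtain ⟨hw', hw'lt, haq, hρgt, hρle, hlog⟩ := hedge i' w' hq
        have hε0 : 0 ≤ epsP n a e p (i', w') := by linarith
        have hμ0 : (0:ℝ) ≤ (a p.1 p.2 : ℝ) * (a i' w' : ℝ) / n := by positivity
        have h1' : epsP n a e p (i', w') ≤
            (1 + epsP n a e p (i', w') / 2) * Real.log (1 + epsP n a e p (i', w')) := by
          nlinarith
        nlinarith [mul_nonneg (mul_nonneg (mul_nonneg hwpos.le
            (sub_nonneg.2 hw'lt.le)) hμ0) hε0,
          mul_nonneg (mul_nonneg (mul_nonneg (mul_nonneg hwpos.le hwpos.le) hD.le) hμ0)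
            (sub_nonneg.2 h1')]
      · simp
    have hsum := Finset.sum_le_sum
      (fun i' (_ : i' ∈ (Finset.univ : Finset (Fin h))) => Finset.sum_le_sum (hkey i'))
    simp only [← Finset.mul_sum] at hsum
    have hpos2 : 0 < p.2 ^ 2 * Real.sqrt d := by positivity
    have h9 : p.2 ^ 2 * Real.sqrt d * (L * (a p.1 p.2 : ℝ)) ≤
        p.2 ^ 2 * Real.sqrt d *
        (∑ x : Fin h, ∑ w' ∈ F,
          if gammaLDAdj d h n H a e p (x, w') ∧ (x, w') ∈ U then
            (a p.1 p.2 : ℝ) * (a x w') / n *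
              ((1 + epsP n a e p (x, w') / 2) * Real.log (1 + epsP n a e p (x, w')))
          else 0) := by linarith [hT1, hsum]
    have hLA := le_of_mul_le_mul_left h9 hpos2
    have h11 : L / 4 * (a p.1 p.2 : ℝ) * Real.log (Real.exp 1 * (n:ℝ) / (a p.1 p.2 : ℝ))
        ≤ L / 4 * (a p.1 p.2 : ℝ) * 4 :=
      mul_le_mul_of_nonneg_left hc (by positivity)
    linarith
  · -- Case 4 < ℓ
    have hα0 : 0 ≤ Real.log (Real.exp 1 * (n:ℝ) / (a p.1 p.2 : ℝ)) /
        (4 * p.2 ^ 2 * Real.sqrt d) := div_nonneg (by linarith) (by positivity)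
    have hkey : ∀ (i' : Fin h), ∀ w' ∈ F,
        2 * (Real.log (Real.exp 1 * (n:ℝ) / (a p.1 p.2 : ℝ)) /
          (4 * p.2 ^ 2 * Real.sqrt d)) *
        (if gammaLDAdj d h n H a e p (i', w') ∧ (i', w') ∈ U then
          p.2 * w' * ((a p.1 p.2 : ℝ) * (a i' w' : ℝ) / n) * epsP n a e p (i', w')
        else 0) ≤
        (if gammaLDAdj d h n H a e p (i', w') ∧ (i', w') ∈ U then
          (a p.1 p.2 : ℝ) * (a i' w' : ℝ) / n *
            ((1 + epsP n a e p (i', w') / 2) * Real.log (1 + epsP n a e p (i', w')))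
        else 0) +
        (Real.log (Real.exp 1 * (n:ℝ) / (a p.1 p.2 : ℝ)) /
          (4 * p.2 ^ 2 * Real.sqrt d)) * (L / Real.sqrt d) *
        (if gammaAdj d h n H p (i', w') then
          w' ^ 2 * (a i' w' : ℝ) * (w' / (p.2 * Real.sqrt d)) else 0) := by
      intro i' w' _
      by_cases hq : gammaLDAdj d h n H a e p (i', w') ∧ (i', w') ∈ U
      · have hgA : gammaAdj d h n H p (i', w') := hq.1.1
        rw [if_pos hq, if_pos hq, if_pos hgA]
        obtain ⟨hw', hw'lt, haq, hρgt, hρle, hlog⟩ := hedge i' w' hq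
        have haqpos : (0:ℝ) < (a i' w' : ℝ) := by
          exact_mod_cast Nat.pos_of_ne_zero haq
        have hμpos : (0:ℝ) < (a p.1 p.2 : ℝ) * (a i' w' : ℝ) / n := by positivity
        have hcore := core L ((n:ℝ)/(a p.1 p.2 : ℝ)) (1 + epsP n a e p (i', w'))
          (w' / (p.2 * Real.sqrt d)) (Real.log (Real.exp 1 * (n:ℝ) / (a p.1 p.2 : ℝ)))
          hL hℓR (by linarith) hρgt hρle (by positivity)
        have hcoreμ := mul_le_mul_of_nonneg_left hcore hμpos.le
        have E1 : 2 * (Real.log (Real.exp 1 * (n:ℝ) / (a p.1 p.2 : ℝ)) /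
              (4 * p.2 ^ 2 * Real.sqrt d)) *
            (p.2 * w' * ((a p.1 p.2 : ℝ) * (a i' w' : ℝ) / n) * epsP n a e p (i', w')) =
            ((a p.1 p.2 : ℝ) * (a i' w' : ℝ) / n) *
            (Real.log (Real.exp 1 * (n:ℝ) / (a p.1 p.2 : ℝ)) / 2 *
              (w' / (p.2 * Real.sqrt d)) * (1 + epsP n a e p (i', w') - 1)) := by
          field_simp
          ring
        have E3 : (Real.log (Real.exp 1 * (n:ℝ) / (a p.1 p.2 : ℝ)) /
              (4 * p.2 ^ 2 * Real.sqrt d)) * (L / Real.sqrt d) *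
            (w' ^ 2 * (a i' w' : ℝ) * (w' / (p.2 * Real.sqrt d))) =
            ((a p.1 p.2 : ℝ) * (a i' w' : ℝ) / n) *
            (Real.log (Real.exp 1 * (n:ℝ) / (a p.1 p.2 : ℝ)) * L *
              ((n:ℝ)/(a p.1 p.2 : ℝ)) / 4 * (w' / (p.2 * Real.sqrt d)) ^ 3) := by
          field_simp
        have E2 : ((a p.1 p.2 : ℝ) * (a i' w' : ℝ) / n) *
            ((1 + epsP n a e p (i', w')) / 2 * Real.log (1 + epsP n a e p (i', w'))) ≤
            ((a p.1 p.2 : ℝ) * (a i' w' : ℝ) / n) *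
            ((1 + epsP n a e p (i', w') / 2) * Real.log (1 + epsP n a e p (i', w'))) := by
          apply mul_le_mul_of_nonneg_left _ hμpos.le
          nlinarith
        rw [E1, E3]
        rw [mul_add] at hcoreμ
        linarith [hcoreμ, E2]
      · rw [if_neg hq, if_neg hq]
        split_ifs with hgA
        · have hw' : 0 < w' := hDp w' hgA.2.2.1
          have : (0:ℝ) ≤ w' ^ 2 * (a i' w' : ℝ) * (w' / (p.2 * Real.sqrt d)) := by positivity
          have h0 : (0:ℝ) ≤ (Real.log (Real.exp 1 * (n:ℝ) / (a p.1 p.2 : ℝ)) /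
              (4 * p.2 ^ 2 * Real.sqrt d)) * (L / Real.sqrt d) *
              (w' ^ 2 * (a i' w' : ℝ) * (w' / (p.2 * Real.sqrt d))) := by
            apply mul_nonneg (mul_nonneg hα0 (by positivity)) this
          simpa using h0
        · simp
    have hsum := Finset.sum_le_sum
      (fun i' (_ : i' ∈ (Finset.univ : Finset (Fin h))) => Finset.sum_le_sum (hkey i'))
    simp only [Finset.sum_add_distrib, ← Finset.mul_sum] at hsum
    have h5 := mul_le_mul_of_nonneg_left hT2 hα0
    have h7 := mul_le_mul_of_nonneg_left hT1 hα0
    have h8 : Real.log (Real.exp 1 * (n:ℝ) / (a p.1 p.2 : ℝ)) /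
          (4 * p.2 ^ 2 * Real.sqrt d) * (L * (a p.1 p.2 : ℝ) * p.2 ^ 2 * Real.sqrt d) =
        L / 4 * (a p.1 p.2 : ℝ) * Real.log (Real.exp 1 * (n:ℝ) / (a p.1 p.2 : ℝ)) := by
      field_simp
    have h6 : Real.log (Real.exp 1 * (n:ℝ) / (a p.1 p.2 : ℝ)) /
          (4 * p.2 ^ 2 * Real.sqrt d) * (L / Real.sqrt d) *
        (∑ x : Fin h, ∑ w' ∈ F,
          if gammaAdj d h n H p (x, w') then
            w' ^ 2 * (a x w' : ℝ) * (w' / (p.2 * Real.sqrt d)) else 0) =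
        Real.log (Real.exp 1 * (n:ℝ) / (a p.1 p.2 : ℝ)) /
          (4 * p.2 ^ 2 * Real.sqrt d) *
        ((L * ∑ x : Fin h, ∑ w' ∈ F,
          if gammaAdj d h n H p (x, w') then
            w' ^ 2 * (a x w' : ℝ) * (w' / (p.2 * Real.sqrt d)) else 0) / Real.sqrt d) := by
      ring
    linarith [hsum, h5, h6, h7, h8]


end RandomLifts
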